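/- Let H be a Hopf algebra and V a vector space, with 𝒜 = 𝒜(H,V) the algebra freely generated by H and V. The subalgebra of 𝒜 generated by the H-submodule H·V (under the adjoint action) is naturally isomorphic, as an algebra, to the tensor algebra T(H·V) over the vector space H·V. -/

import Mathlib

open TensorProduct LinearMap

/-- The adjoint action of a Hopf algebra `H` on an algebra `𝒜` containing it (via `ι`):
`h · a = ∑ᵢ h₁ᵢ a S(h₂ᵢ)`, packaged as a bilinear map. -/
noncomputable def adjAct {F H C : Type*} [Field F] [Ring H]
    [HopfAlgebra F H] [Ring C] [Algebra F C] (ι : H →ₐ[F] C) : H →ₗ[F] C →ₗ[F] C :=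
  (TensorProduct.lift ((LinearMap.llcomp F C C C).compl₁₂
      ((LinearMap.mul F C).comp ι.toLinearMap)
      (((LinearMap.mul F C).flip).comp
        (ι.toLinearMap ∘ₗ (HopfAlgebra.antipode (R := F) (A := H)))))) ∘ₗ
    Coalgebra.comul

section ConvAlg

variable (R C B : Type*) [CommSemiring R]
  [AddCommMonoid C] [Module R C] [Coalgebra R C]
  [Semiring B] [Algebra R B]

/-- Type synonym for `C →ₗ[R] B` carrying the convolution algebra structure. -/
def ConvAlg := C →ₗ[R] B

variable {R C B}
set_option linter.unusedSectionVars false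

namespace ConvAlg

/-- Build an element. -/
def of (f : C →ₗ[R] B) : ConvAlg R C B := f

/-- Underlying linear map. -/
def toLin (f : ConvAlg R C B) : C →ₗ[R] B := f

@[simp] lemma toLin_of (f : C →ₗ[R] B) : toLin (of f : ConvAlg R C B) = f := rfl

instance : AddCommMonoid (ConvAlg R C B) := inferInstanceAs (AddCommMonoid (C →ₗ[R] B))
instance : Module R (ConvAlg R C B) := inferInstanceAs (Module R (C →ₗ[R] B))

@[simp] lemma toLin_add (f g : ConvAlg R C B) : toLin (f + g) = toLin f + toLin g := rfl
@[simp] lemma toLin_smul (r : R) (f : ConvAlg R C B) : toLin (r • f) = r • toLin f := rfl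
@[simp] lemma toLin_zero : toLin (0 : ConvAlg R C B) = 0 := rfl


@[simp] lemma toLin_sum_apply {ι : Type*} (s : Finset ι) (f : ι → ConvAlg R C B) (a : C) :
    toLin (∑ i ∈ s, f i) a = ∑ i ∈ s, toLin (f i) a := by
  classical
  induction s using Finset.induction with
  | empty => simp
  | insert _ _ h ih => rw [Finset.sum_insert h, Finset.sum_insert h, toLin_add, LinearMap.add_apply, ih]

lemma ext {f g : ConvAlg R C B} (h : ∀ a, toLin f a = toLin g a) : f = g :=
  LinearMap.ext h

noncomputable instance : Mul (ConvAlg R C B) :=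
  ⟨fun f g => of (LinearMap.mul' R B ∘ₗ TensorProduct.map (toLin f) (toLin g) ∘ₗ Coalgebra.comul)⟩

noncomputable instance : One (ConvAlg R C B) :=
  ⟨of ((Algebra.linearMap R B) ∘ₗ Coalgebra.counit)⟩

lemma mul_def (f g : ConvAlg R C B) :
    f * g = of (LinearMap.mul' R B ∘ₗ TensorProduct.map (toLin f) (toLin g) ∘ₗ Coalgebra.comul) :=
  rfl

@[simp] lemma toLin_one (a : C) :
    toLin (1 : ConvAlg R C B) a = algebraMap R B (Coalgebra.counit a) := rfl

lemma mul_repr (f g : ConvAlg R C B) {a : C} {κ : Type*} (r : Coalgebra.Repr R a κ) :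
    toLin (f * g) a = ∑ i ∈ r.index, toLin f (r.left i) * toLin g (r.right i) := by
  rw [mul_def]
  show LinearMap.mul' R B (TensorProduct.map (toLin f) (toLin g) (Coalgebra.comul a)) = _
  rw [← r.eq, map_sum, map_sum]
  simp

noncomputable instance instSemiring : Semiring (ConvAlg R C B) where
  __ := (inferInstance : AddCommMonoid (ConvAlg R C B))
  left_distrib f g h := by
    refine ext fun a => ?_
    obtain ⟨r⟩ : Nonempty (Coalgebra.Repr R a (C × C)) := ⟨Coalgebra.Repr.arbitrary R a⟩
    simp [mul_repr _ _ r, Finset.sum_add_distrib, mul_add]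
  right_distrib f g h := by
    refine ext fun a => ?_
    obtain ⟨r⟩ : Nonempty (Coalgebra.Repr R a (C × C)) := ⟨Coalgebra.Repr.arbitrary R a⟩
    simp [mul_repr _ _ r, Finset.sum_add_distrib, add_mul]
  zero_mul f := by
    refine ext fun a => ?_
    obtain ⟨r⟩ : Nonempty (Coalgebra.Repr R a (C × C)) := ⟨Coalgebra.Repr.arbitrary R a⟩
    simp [mul_repr _ _ r]
  mul_zero f := by
    refine ext fun a => ?_
    obtain ⟨r⟩ : Nonempty (Coalgebra.Repr R a (C × C)) := ⟨Coalgebra.Repr.arbitrary R a⟩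
    simp [mul_repr _ _ r]
  one_mul f := by
    refine ext fun a => ?_
    obtain ⟨r⟩ : Nonempty (Coalgebra.Repr R a (C × C)) := ⟨Coalgebra.Repr.arbitrary R a⟩
    rw [mul_repr _ _ r]
    have key := Coalgebra.sum_counit_tmul_map_eq (R := R) (toLin f) a (repr := r)
    apply_fun (TensorProduct.lift ((LinearMap.lsmul R B))) at key
    simp only [map_sum, TensorProduct.lift.tmul, LinearMap.lsmul_apply, one_smul] at key
    simp only [Algebra.smul_def] at key
    exact key
  mul_one f := by
    refine ext fun a => ?_
    obtain ⟨r⟩ : Nonempty (Coalgebra.Repr R a (C × C)) := ⟨Coalgebra.Repr.arbitrary R a⟩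
    rw [mul_repr _ _ r]
    have key := Coalgebra.sum_map_tmul_counit_eq (R := R) (toLin f) a (repr := r)
    apply_fun (TensorProduct.lift ((LinearMap.lsmul R B).flip)) at key
    simp only [map_sum, TensorProduct.lift.tmul, LinearMap.flip_apply, LinearMap.lsmul_apply,
      one_smul] at key
    calc ∑ i ∈ r.index, toLin f (r.left i) * algebraMap R B (Coalgebra.counit (r.right i))
        = ∑ i ∈ r.index, Coalgebra.counit (R := R) (r.right i) • toLin f (r.left i) := by
          refine Finset.sum_congr rfl fun i _ => ?_
          rw [← Algebra.commutes, Algebra.smul_def]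
      _ = toLin f a := key
  mul_assoc f g h := by
    refine ext fun a => ?_
    set r := Coalgebra.Repr.arbitrary R a with hr
    set r₁ := fun i => Coalgebra.Repr.arbitrary R (r.left i)
    set r₂ := fun i => Coalgebra.Repr.arbitrary R (r.right i)
    have key := Coalgebra.sum_map_tmul_tmul_eq (R := R) (toLin f) (toLin g) (toLin h) a
      (repr := r) (a₁ := r₁) (a₂ := r₂)
    apply_fun (LinearMap.mul' R B ∘ₗ (LinearMap.mul' R B).lTensor B) at key
    simp only [map_sum, LinearMap.comp_apply, LinearMap.lTensor_tmul, LinearMap.mul'_apply,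
      TensorProduct.map_tmul] at key
    rw [mul_repr _ _ r, mul_repr _ _ r]
    have l1 : ∀ i ∈ r.index, toLin (f * g) (r.left i) * toLin h (r.right i)
        = ∑ j ∈ (r₁ i).index,
            toLin f ((r₁ i).left j) * ((toLin g ((r₁ i).right j)) * toLin h (r.right i)) := by
      intro i _
      rw [mul_repr _ _ (r₁ i), Finset.sum_mul]
      simp [mul_assoc]
    have l2 : ∀ i ∈ r.index, toLin f (r.left i) * toLin (g * h) (r.right i)
        = ∑ j ∈ (r₂ i).index,
            toLin f (r.left i) * (toLin g ((r₂ i).left j) * toLin h ((r₂ i).right j)) := by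
      intro i _
      rw [mul_repr _ _ (r₂ i), Finset.mul_sum]
    rw [Finset.sum_congr rfl l1, Finset.sum_congr rfl l2, ← key]

noncomputable instance instAlgebra : Algebra R (ConvAlg R C B) :=
  Algebra.ofModule
    (fun r f g => by
      refine ext fun a => ?_
      obtain ⟨rp⟩ : Nonempty (Coalgebra.Repr R a (C × C)) := ⟨Coalgebra.Repr.arbitrary R a⟩
      simp [mul_repr _ _ rp, Finset.smul_sum, smul_mul_assoc])
    (fun r f g => by
      refine ext fun a => ?_
      obtain ⟨rp⟩ : Nonempty (Coalgebra.Repr R a (C × C)) := ⟨Coalgebra.Repr.arbitrary R a⟩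
      simp [mul_repr _ _ rp, Finset.smul_sum, mul_smul_comm])

lemma toLin_algebraMap (r : R) (a : C) :
    toLin (algebraMap R (ConvAlg R C B) r) a = r • algebraMap R B (Coalgebra.counit a) := by
  have : algebraMap R (ConvAlg R C B) r = r • (1 : ConvAlg R C B) := by
    rw [Algebra.algebraMap_eq_smul_one]
  rw [this]
  simp

end ConvAlg

end ConvAlg
section Helpers

variable {R A : Type*} [CommSemiring R]

/-- A representation of `comul 1` in a bialgebra. -/
noncomputable def reprOne [Semiring A] [Bialgebra R A] : Coalgebra.Repr R (1 : A) Unit where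
  index := Finset.univ
  left _ := 1
  right _ := 1
  eq := by simp [Algebra.TensorProduct.one_def]

/-- Product of two representations, for a bialgebra. -/
noncomputable def reprMul [Semiring A] [Bialgebra R A] {a b : A}
    {κa κb : Type*} (ra : Coalgebra.Repr R a κa) (rb : Coalgebra.Repr R b κb) :
    Coalgebra.Repr R (a * b) (κa × κb) where
  index := ra.index ×ˢ rb.index
  left p := ra.left p.1 * rb.left p.2
  right p := ra.right p.1 * rb.right p.2
  eq := by
    rw [Finset.sum_product, Bialgebra.comul_mul, ← ra.eq, ← rb.eq, Finset.sum_mul_sum]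
    simp [Algebra.TensorProduct.tmul_mul_tmul]

lemma antipode_one' [Semiring A] [HopfAlgebra R A] :
    HopfAlgebra.antipode (R := R) (1 : A) = 1 := by
  have := HopfAlgebra.sum_mul_antipode_eq_algebraMap_counit (reprOne (R := R) (A := A))
  simpa [reprOne] using this

end Helpers

section AdjActLemmas

variable {F H C D : Type*} [Field F] [Ring H] [HopfAlgebra F H]
  [Ring C] [Algebra F C] [Ring D] [Algebra F D]

lemma adjAct_repr (ι : H →ₐ[F] C) {h : H} {κ : Type*} (r : Coalgebra.Repr F h κ) (a : C) :
    adjAct ι h a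
      = ∑ i ∈ r.index, ι (r.left i) * a * ι (HopfAlgebra.antipode (R := F) (r.right i)) := by
  rw [adjAct]
  simp only [LinearMap.comp_apply]
  rw [← r.eq, map_sum]
  simp only [LinearMap.coe_sum, Finset.sum_apply]
  refine Finset.sum_congr rfl fun i _ => ?_
  simp [mul_assoc]

lemma adjAct_one (ι : H →ₐ[F] C) (a : C) : adjAct ι 1 a = a := by
  rw [adjAct_repr ι (reprOne (R := F)) a]
  simp [reprOne, antipode_one']

lemma adjAct_natural (ψ : C →ₐ[F] D) (ι : H →ₐ[F] C) (h : H) (a : C) :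
    ψ (adjAct ι h a) = adjAct (ψ.comp ι) h (ψ a) := by
  obtain ⟨r⟩ : Nonempty (Coalgebra.Repr F h (H × H)) := ⟨Coalgebra.Repr.arbitrary F h⟩
  rw [adjAct_repr ι r, adjAct_repr (ψ.comp ι) r, map_sum]
  simp

end AdjActLemmas
section Main

variable {F H V : Type*} [Field F] [Ring H] [HopfAlgebra F H]
  [AddCommGroup V] [Module F V]

/-- The `H`-action on `H ⊗ V` by left multiplication on the first factor. -/
noncomputable def hopfAct : H →ₗ[F] (H ⊗[F] V) →ₗ[F] (H ⊗[F] V) :=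
  (LinearMap.rTensorHom V).comp (LinearMap.mul F H)

@[simp] lemma hopfAct_tmul (h g : H) (v : V) :
    hopfAct (F := F) h (g ⊗ₜ v) = (h * g) ⊗ₜ v := rfl

lemma hopfAct_one (w : H ⊗[F] V) : hopfAct (F := F) 1 w = w := by
  induction w with
  | zero => simp
  | tmul g v => simp
  | add x y hx hy => simp [hx, hy]

lemma hopfAct_mul (g h : H) (w : H ⊗[F] V) :
    hopfAct (F := F) (g * h) w = hopfAct (F := F) g (hopfAct (F := F) h w) := by
  induction w with
  | zero => simp
  | tmul x v => simp [mul_assoc]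
  | add x y hx hy => simp [hx, hy]

/-- Generator map for the measuring `Φ`. -/
noncomputable def psi0 :
    (H ⊗[F] V) →ₗ[F] ConvAlg F H (TensorAlgebra F (H ⊗[F] V)) where
  toFun w := ConvAlg.of ((TensorAlgebra.ι F (M := H ⊗[F] V)) ∘ₗ ((hopfAct (F := F)).flip w))
  map_add' w w' := by
    refine ConvAlg.ext fun h => ?_
    simp
  map_smul' r w := by
    refine ConvAlg.ext fun h => ?_
    simp

/-- The measuring `Φ : T(W) → Hom(H, T(W))`. -/
noncomputable def Phi :
    TensorAlgebra F (H ⊗[F] V) →ₐ[F] ConvAlg F H (TensorAlgebra F (H ⊗[F] V)) :=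
  TensorAlgebra.lift F (psi0 (F := F) (H := H) (V := V))

@[simp] lemma Phi_ι (w : H ⊗[F] V) (h : H) :
    ConvAlg.toLin (Phi (TensorAlgebra.ι F w)) h
      = TensorAlgebra.ι F (hopfAct (F := F) h w) := by
  rw [Phi, TensorAlgebra.lift_ι_apply]
  rfl

lemma Phi_algebraMap (r : F) (h : H) :
    ConvAlg.toLin (Phi (algebraMap F (TensorAlgebra F (H ⊗[F] V)) r)) h
      = Coalgebra.counit (R := F) h • algebraMap F (TensorAlgebra F (H ⊗[F] V)) r := by
  rw [AlgHom.commutes, ConvAlg.toLin_algebraMap]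
  rw [Algebra.smul_def, Algebra.smul_def, ← map_mul, ← map_mul, mul_comm]

lemma Phi_mul_repr (b c : TensorAlgebra F (H ⊗[F] V)) {h : H} {κ : Type*} (r : Coalgebra.Repr F h κ) :
    ConvAlg.toLin (Phi (b * c)) h
      = ∑ i ∈ r.index, ConvAlg.toLin (Phi b) (r.left i) * ConvAlg.toLin (Phi c) (r.right i) := by
  rw [map_mul, ConvAlg.mul_repr _ _ r]

lemma Phi_unital (b : TensorAlgebra F (H ⊗[F] V)) :
    ConvAlg.toLin (Phi b) 1 = b := by
  induction b using TensorAlgebra.induction with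
  | algebraMap r => rw [Phi_algebraMap]; simp
  | ι w => rw [Phi_ι, hopfAct_one]
  | mul x y hx hy =>
      rw [Phi_mul_repr x y (reprOne (R := F))]
      simp [reprOne, hx, hy]
  | add x y hx hy => simp [map_add, hx, hy]

end Main
section Main2

variable {F H V : Type*} [Field F] [Ring H] [HopfAlgebra F H]
  [AddCommGroup V] [Module F V]

lemma Phi_mul_act (b : TensorAlgebra F (H ⊗[F] V)) (g h : H) :
    ConvAlg.toLin (Phi b) (g * h)
      = ConvAlg.toLin (Phi (ConvAlg.toLin (Phi b) h)) g := by
  induction b using TensorAlgebra.induction generalizing g h with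
  | algebraMap r =>
      have h1 : ConvAlg.toLin (Phi (algebraMap F (TensorAlgebra F (H ⊗[F] V)) r)) h
          = Coalgebra.counit (R := F) h • algebraMap F (TensorAlgebra F (H ⊗[F] V)) r :=
        Phi_algebraMap r h
      rw [h1, map_smul, ConvAlg.toLin_smul, LinearMap.smul_apply, Phi_algebraMap,
        Phi_algebraMap, Bialgebra.counit_mul, mul_smul, smul_comm]
  | ι w => rw [Phi_ι, Phi_ι, hopfAct_mul, Phi_ι]
  | mul x y hx hy =>
      obtain ⟨rg⟩ : Nonempty (Coalgebra.Repr F g (H × H)) := ⟨Coalgebra.Repr.arbitrary F g⟩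
      obtain ⟨rh⟩ : Nonempty (Coalgebra.Repr F h (H × H)) := ⟨Coalgebra.Repr.arbitrary F h⟩
      rw [Phi_mul_repr x y (reprMul rg rh)]
      have lhs : ∑ p ∈ (reprMul rg rh).index,
          ConvAlg.toLin (Phi x) ((reprMul rg rh).left p)
            * ConvAlg.toLin (Phi y) ((reprMul rg rh).right p)
          = ∑ i ∈ rg.index, ∑ j ∈ rh.index,
              ConvAlg.toLin (Phi (ConvAlg.toLin (Phi x) (rh.left j))) (rg.left i)
                * ConvAlg.toLin (Phi (ConvAlg.toLin (Phi y) (rh.right j))) (rg.right i) := by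
        rw [← Finset.sum_product']
        refine Finset.sum_congr rfl fun p _ => ?_
        exact congr_arg₂ (· * ·) (hx (rg.left p.1) (rh.left p.2))
          (hy (rg.right p.1) (rh.right p.2))
      rw [lhs, Phi_mul_repr x y rh, map_sum, ConvAlg.toLin_sum_apply, Finset.sum_comm]
      refine Finset.sum_congr rfl fun j _ => ?_
      rw [Phi_mul_repr _ _ rg]
  | add x y hx hy => simp only [map_add, ConvAlg.toLin_add, LinearMap.add_apply, hx, hy]

/-- The `H`-action on the tensor algebra, as an algebra map to endomorphisms. -/
noncomputable def alpha : H →ₐ[F] Module.End F (TensorAlgebra F (H ⊗[F] V)) :=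
  AlgHom.ofLinearMap
    { toFun := fun h =>
        { toFun := fun b => ConvAlg.toLin (Phi b) h
          map_add' := fun b b' => by simp only [map_add, ConvAlg.toLin_add, LinearMap.add_apply]
          map_smul' := fun r b => by
            simp only [map_smul, ConvAlg.toLin_smul, LinearMap.smul_apply, RingHom.id_apply] }
      map_add' := fun g h => by
        ext b
        exact map_add (ConvAlg.toLin (Phi b)) g h
      map_smul' := fun r h => by
        ext b
        exact map_smul (ConvAlg.toLin (Phi b)) r h }
    (by ext b; exact Phi_unital b)
    (fun g h => by ext b; exact Phi_mul_act b g h)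

@[simp] lemma alpha_apply (h : H) (b : TensorAlgebra F (H ⊗[F] V)) :
    alpha (F := F) h b = ConvAlg.toLin (Phi b) h := rfl

end Main2
section Main3

variable {F H V : Type*} [Field F] [Ring H] [HopfAlgebra F H]
  [AddCommGroup V] [Module F V]

/-- Auxiliary bilinear gadget `y ⊗ z ↦ α(y ⬝ S z) c`. -/
noncomputable def xiInner (c : TensorAlgebra F (H ⊗[F] V)) :
    H ⊗[F] H →ₗ[F] TensorAlgebra F (H ⊗[F] V) :=
  TensorProduct.lift
    (((LinearMap.mul F (Module.End F (TensorAlgebra F (H ⊗[F] V)))).compl₁₂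
        (alpha (F := F) (V := V)).toLinearMap
        ((alpha (F := F) (V := V)).toLinearMap ∘ₗ HopfAlgebra.antipode (R := F))).compr₂
      (LinearMap.applyₗ c))

@[simp] lemma xiInner_tmul (c : TensorAlgebra F (H ⊗[F] V)) (y z : H) :
    xiInner c (y ⊗ₜ z)
      = alpha (F := F) (V := V) (y * HopfAlgebra.antipode (R := F) z) c := by
  simp only [xiInner, TensorProduct.lift.tmul, LinearMap.compr₂_apply, LinearMap.compl₁₂_apply,
    LinearMap.applyₗ_apply_apply, AlgHom.toLinearMap_apply, LinearMap.comp_apply, map_mul,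
    Module.End.mul_apply, LinearMap.mul_apply']

lemma adjAct_alpha_mulLeft (b : TensorAlgebra F (H ⊗[F] V)) (h : H) :
    adjAct (alpha (F := F) (V := V)) h (LinearMap.mulLeft F b)
      = LinearMap.mulLeft F (ConvAlg.toLin (Phi b) h) := by
  apply LinearMap.ext; intro c
  classical
  set r := Coalgebra.Repr.arbitrary F h with hrdef
  set r₁ : (i : H × H) → Coalgebra.Repr F (r.left i) (H × H) :=
    fun i => Coalgebra.Repr.arbitrary F (r.left i) with hr1
  set r₂ : (i : H × H) → Coalgebra.Repr F (r.right i) (H × H) :=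
    fun i => Coalgebra.Repr.arbitrary F (r.right i) with hr2
  rw [adjAct_repr _ r, LinearMap.sum_apply]
  have step1 : ∀ i ∈ r.index,
      (alpha (F := F) (V := V) (r.left i) * LinearMap.mulLeft F b
          * alpha (F := F) (V := V) (HopfAlgebra.antipode (R := F) (r.right i))) c
        = ∑ j ∈ (r₁ i).index, ConvAlg.toLin (Phi b) ((r₁ i).left j)
            * xiInner c ((r₁ i).right j ⊗ₜ r.right i) := by
    intro i _
    rw [Module.End.mul_apply, Module.End.mul_apply, LinearMap.mulLeft_apply, alpha_apply,
      Phi_mul_repr b _ (r₁ i)]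
    refine Finset.sum_congr rfl fun j _ => ?_
    rw [xiInner_tmul, map_mul, Module.End.mul_apply, ← alpha_apply, ← alpha_apply]
  rw [Finset.sum_congr rfl step1]
  have key := Coalgebra.sum_tmul_tmul_eq (R := F) r r₁ r₂
  apply_fun (TensorProduct.lift ((LinearMap.mul F (TensorAlgebra F (H ⊗[F] V))).compl₁₂
      (ConvAlg.toLin (Phi b)) (xiInner c))) at key
  simp only [map_sum, TensorProduct.lift.tmul, LinearMap.compl₁₂_apply,
    LinearMap.mul_apply'] at key
  rw [key]
  have step3 : ∀ i ∈ r.index,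
      ∑ j ∈ (r₂ i).index, ConvAlg.toLin (Phi b) (r.left i)
          * xiInner c ((r₂ i).left j ⊗ₜ (r₂ i).right j)
        = Coalgebra.counit (R := F) (r.right i) • (ConvAlg.toLin (Phi b) (r.left i) * c) := by
    intro i _
    rw [← Finset.mul_sum]
    have : ∑ j ∈ (r₂ i).index, xiInner c ((r₂ i).left j ⊗ₜ (r₂ i).right j)
        = Coalgebra.counit (R := F) (r.right i) • c := by
      rw [Finset.sum_congr rfl fun j _ => xiInner_tmul c ((r₂ i).left j) ((r₂ i).right j)]
      rw [← LinearMap.sum_apply, ← map_sum, HopfAlgebra.sum_mul_antipode_eq_algebraMap_counit (r₂ i),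
        AlgHom.commutes]
      simp
    rw [this, mul_smul_comm]
  rw [Finset.sum_congr rfl step3]
  rw [LinearMap.mulLeft_apply]
  have hsum : ∑ i ∈ r.index, Coalgebra.counit (R := F) (r.right i) • r.left i = h := by
    have h0 := Coalgebra.sum_tmul_counit_eq (R := F) r
    have h2 := congrArg (fun t => TensorProduct.rid F H t) h0
    simp only [map_sum, TensorProduct.rid_tmul, one_smul] at h2
    exact h2
  have hPhib : ∑ i ∈ r.index,
      Coalgebra.counit (R := F) (r.right i) • ConvAlg.toLin (Phi b) (r.left i)
      = ConvAlg.toLin (Phi b) h := by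
    conv_rhs => rw [← hsum]
    rw [map_sum]
    simp only [map_smul]
  calc ∑ i ∈ r.index,
        Coalgebra.counit (R := F) (r.right i) • (ConvAlg.toLin (Phi b) (r.left i) * c)
      = (∑ i ∈ r.index,
          Coalgebra.counit (R := F) (r.right i) • ConvAlg.toLin (Phi b) (r.left i)) * c := by
        rw [Finset.sum_mul]
        exact Finset.sum_congr rfl fun i _ => (smul_mul_assoc _ _ _).symm
    _ = ConvAlg.toLin (Phi b) h * c := by rw [hPhib]

end Main3
section SmallTA

universe v

lemma small_tensorAlgebra (F : Type*) [Field F] (M : Type v) [Small.{v} F]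
    [AddCommGroup M] [Module F M] : Small.{v} (TensorAlgebra F M) := by
  classical
  set s : Set (TensorAlgebra F M) :=
    Set.range fun l : List M => (l.map (TensorAlgebra.ι F)).prod with hs
  have hspan : ∀ t : TensorAlgebra F M, t ∈ Submodule.span F s := by
    intro t
    induction t using TensorAlgebra.induction with
    | algebraMap r =>
        rw [Algebra.algebraMap_eq_smul_one]
        refine Submodule.smul_mem _ _ (Submodule.subset_span ⟨[], by simp⟩)
    | ι w => exact Submodule.subset_span ⟨[w], by simp⟩
    | mul x y hx hy =>
        have hmm := Submodule.mul_mem_mul hx hy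
        rw [Submodule.span_mul_span] at hmm
        refine Submodule.span_le.mpr ?_ hmm
        intro z hz
        rw [Set.mem_mul] at hz
        obtain ⟨x1, ⟨l1, rfl⟩, y1, ⟨l2, rfl⟩, rfl⟩ := hz
        exact Submodule.subset_span ⟨l1 ++ l2, by simp⟩
    | add x y hx hy => exact Submodule.add_mem _ hx hy
  have hsurj : Function.Surjective
      (Finsupp.linearCombination F fun l : List M => (l.map (TensorAlgebra.ι F)).prod) := by
    intro t
    have : t ∈ LinearMap.range
        (Finsupp.linearCombination F fun l : List M => (l.map (TensorAlgebra.ι F)).prod) := by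
      rw [Finsupp.range_linearCombination]
      exact hspan t
    exact this
  haveI : Small.{v} (List M →₀ F) := small_of_injective (DFunLike.coe_injective (F := List M →₀ F))
  exact small_of_surjective hsurj

end SmallTA

/-- in the algebra `𝒜 = 𝒜(H,V)` freely generated by a Hopf algebra `H` and
a vector space `V`, the subalgebra generated by the `H`-submodule `H·V` is naturally
isomorphic to the tensor algebra on the vector space `H·V`: the canonical algebra map
`T(H·V) → 𝒜` induced by the inclusion `H·V ⊆ 𝒜` is injective with image that subalgebra. -/
theorem subalgebra_on_HV_is_tensor_algebra
    (F : Type*) (H V 𝒜 : Type u) [Field F] [Ring H] [HopfAlgebra F H]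
    [AddCommGroup V] [Module F V] [Ring 𝒜] [Algebra F 𝒜]
    (ιH : H →ₐ[F] 𝒜) (ιV : V →ₗ[F] 𝒜)
    (hUP : ∀ (B : Type u) (_ : Ring B) (_ : Algebra F B) (f : H →ₐ[F] B) (g : V →ₗ[F] B),
      ∃! φ : 𝒜 →ₐ[F] B, φ.comp ιH = f ∧ φ.toLinearMap ∘ₗ ιV = g)
    (HV : Submodule F 𝒜)
    (hHV : HV = Submodule.span F {x : 𝒜 | ∃ (h : H) (v : V), x = adjAct ιH h (ιV v)}) :
    Function.Injective (TensorAlgebra.lift F HV.subtype) ∧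
    (TensorAlgebra.lift F HV.subtype).range = Algebra.adjoin F (HV : Set 𝒜) := by
  classical
  -- `H` is nontrivial, hence `F` is `u`-small.
  have h10 : (1 : H) ≠ 0 := by
    intro hcon
    have h2 : (Coalgebra.counit (R := F) (1 : H)) = 1 := Bialgebra.counit_one
    rw [hcon, map_zero] at h2
    exact one_ne_zero h2.symm
  haveI : Nontrivial H := ⟨⟨1, 0, h10⟩⟩
  haveI : Small.{u} F := small_of_injective (algebraMap F H).injective
  haveI : Small.{u} (TensorAlgebra F (H ⊗[F] V)) := small_tensorAlgebra F (H ⊗[F] V)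
  haveI : Small.{u} (Module.End F (TensorAlgebra F (H ⊗[F] V))) :=
    small_of_injective
      (f := fun (f : Module.End F (TensorAlgebra F (H ⊗[F] V))) =>
        (f : TensorAlgebra F (H ⊗[F] V) → TensorAlgebra F (H ⊗[F] V)))
      DFunLike.coe_injective
  set E := Module.End F (TensorAlgebra F (H ⊗[F] V)) with hE
  let eE : Shrink.{u} E ≃ₐ[F] E := Shrink.algEquiv F E
  -- the map `v ↦ (left multiplication by ι (1 ⊗ v))`
  let gE : V →ₗ[F] E :=
    { toFun := fun v => LinearMap.mulLeft F (TensorAlgebra.ι F ((1 : H) ⊗ₜ[F] v))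
      map_add' := fun v v' => by
        refine LinearMap.ext fun c => ?_
        show TensorAlgebra.ι F ((1 : H) ⊗ₜ[F] (v + v')) * c
            = TensorAlgebra.ι F ((1 : H) ⊗ₜ[F] v) * c + TensorAlgebra.ι F ((1 : H) ⊗ₜ[F] v') * c
        rw [TensorProduct.tmul_add, map_add, add_mul]
      map_smul' := fun r v => by
        refine LinearMap.ext fun c => ?_
        show TensorAlgebra.ι F ((1 : H) ⊗ₜ[F] (r • v)) * c
            = r • (TensorAlgebra.ι F ((1 : H) ⊗ₜ[F] v) * c)
        rw [TensorProduct.tmul_smul, map_smul, smul_mul_assoc] }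
  obtain ⟨φ', ⟨hφ'H, hφ'V⟩, -⟩ := hUP (Shrink.{u} E) inferInstance inferInstance
    ((eE.symm.toAlgHom).comp (alpha (F := F) (V := V))) (eE.symm.toLinearMap ∘ₗ gE)
  set φ : 𝒜 →ₐ[F] E := (eE.toAlgHom).comp φ' with hφ
  have hφH : ∀ h : H, φ (ιH h) = alpha (F := F) (V := V) h := by
    intro h
    have h1 := AlgHom.congr_fun hφ'H h
    simp only [AlgHom.comp_apply] at h1
    show eE (φ' (ιH h)) = _
    rw [h1]
    exact eE.apply_symm_apply _
  have hφV : ∀ v : V, φ (ιV v) = gE v := by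
    intro v
    have h1 := LinearMap.congr_fun hφ'V v
    simp only [LinearMap.comp_apply, AlgHom.toLinearMap_apply, AlgEquiv.toLinearMap_apply] at h1
    show eE (φ' (ιV v)) = _
    rw [h1]
    exact eE.apply_symm_apply _
  -- the key generator computation
  have hgen : ∀ (h : H) (v : V),
      φ (adjAct ιH h (ιV v)) = LinearMap.mulLeft F (TensorAlgebra.ι F (h ⊗ₜ[F] v)) := by
    intro h v
    rw [adjAct_natural φ ιH h (ιV v)]
    have hcomp : φ.comp ιH = alpha (F := F) (V := V) := AlgHom.ext hφH
    rw [hcomp, hφV v]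
    show adjAct (alpha (F := F) (V := V)) h
      (LinearMap.mulLeft F (TensorAlgebra.ι F ((1 : H) ⊗ₜ[F] v))) = _
    rw [adjAct_alpha_mulLeft, Phi_ι, hopfAct_tmul, mul_one]
  -- the linear map realizing generators of `HV`
  set π : (H ⊗[F] V) →ₗ[F] 𝒜 := TensorProduct.lift ((adjAct ιH).compl₂ ιV) with hπdef
  have π_tmul : ∀ (h : H) (v : V), π (h ⊗ₜ[F] v) = adjAct ιH h (ιV v) := by
    intro h v
    simp [hπdef]
  have hrange : HV = LinearMap.range π := by
    rw [hHV]
    apply le_antisymm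
    · rw [Submodule.span_le]
      rintro x ⟨h, v, rfl⟩
      exact ⟨h ⊗ₜ[F] v, π_tmul h v⟩
    · rintro x ⟨w, rfl⟩
      induction w using TensorProduct.induction_on with
      | zero => simpa using Submodule.zero_mem _
      | tmul h v => exact Submodule.subset_span ⟨h, v, (π_tmul h v).symm⟩
      | add a b ha hb =>
          rw [map_add]
          exact Submodule.add_mem _ ha hb
  set L' : TensorAlgebra F (H ⊗[F] V) →ₐ[F] 𝒜 := TensorAlgebra.lift F π with hL'
  have hML : ∀ t : TensorAlgebra F (H ⊗[F] V), φ (L' t) = LinearMap.mulLeft F t := by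
    intro t
    induction t using TensorAlgebra.induction with
    | algebraMap r =>
        rw [AlgHom.commutes, AlgHom.commutes]
        refine LinearMap.ext fun c => ?_
        show algebraMap F E r c = _
        rw [Module.algebraMap_end_apply, LinearMap.mulLeft_apply, Algebra.smul_def]
    | ι w =>
        induction w using TensorProduct.induction_on with
        | zero => simp only [map_zero]; exact LinearMap.ext fun c => (zero_mul c).symm
        | tmul h v =>
            rw [hL', TensorAlgebra.lift_ι_apply, π_tmul]
            exact hgen h v
        | add a b ha hb =>
            rw [map_add, map_add, map_add, ha, hb]
            exact LinearMap.ext fun c => (add_mul _ _ c).symm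
    | mul x y hx hy =>
        rw [map_mul, map_mul, hx, hy]
        exact LinearMap.ext fun c => (mul_assoc x y c).symm
    | add x y hx hy =>
        rw [map_add, map_add, hx, hy]
        exact LinearMap.ext fun c => (add_mul x y c).symm
  have hinjL' : Function.Injective L' := by
    intro a b hab
    have h1 := congrArg φ hab
    rw [hML, hML] at h1
    have h2 := congrArg (fun f : E => f (1 : TensorAlgebra F (H ⊗[F] V))) h1
    have h3 : a * 1 = b * 1 := h2
    rwa [mul_one, mul_one] at h3
  have hmem : ∀ w, π w ∈ HV := fun w => by rw [hrange]; exact ⟨w, rfl⟩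
  set π' : (H ⊗[F] V) →ₗ[F] HV := π.codRestrict HV hmem with hπ'
  have hπ'surj : Function.Surjective π' := by
    rintro ⟨x, hx⟩
    rw [hrange] at hx
    obtain ⟨w, hw⟩ := hx
    exact ⟨w, Subtype.ext hw⟩
  set Tπ' : TensorAlgebra F (H ⊗[F] V) →ₐ[F] TensorAlgebra F HV :=
    TensorAlgebra.lift F ((TensorAlgebra.ι F (M := HV)) ∘ₗ π') with hTπ'
  have hTπ'ι : ∀ w, Tπ' (TensorAlgebra.ι F w) = TensorAlgebra.ι F (π' w) := by
    intro w
    rw [hTπ', TensorAlgebra.lift_ι_apply]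
    rfl
  have hTπ'surj : Function.Surjective Tπ' := by
    intro t
    induction t using TensorAlgebra.induction with
    | algebraMap r => exact ⟨algebraMap F _ r, Tπ'.commutes r⟩
    | ι w =>
        obtain ⟨u, hu⟩ := hπ'surj w
        exact ⟨TensorAlgebra.ι F u, by rw [hTπ'ι, hu]⟩
    | mul x y hx hy =>
        obtain ⟨a, rfl⟩ := hx
        obtain ⟨b, rfl⟩ := hy
        exact ⟨a * b, map_mul _ _ _⟩
    | add x y hx hy =>
        obtain ⟨a, rfl⟩ := hx
        obtain ⟨b, rfl⟩ := hy
        exact ⟨a + b, map_add _ _ _⟩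
  have hfact : ∀ t, (TensorAlgebra.lift F HV.subtype) (Tπ' t) = L' t := by
    have hc : (TensorAlgebra.lift F HV.subtype).comp Tπ' = L' := by
      apply TensorAlgebra.hom_ext
      refine LinearMap.ext fun w => ?_
      simp only [LinearMap.comp_apply, AlgHom.toLinearMap_apply, AlgHom.comp_apply]
      rw [hTπ'ι, TensorAlgebra.lift_ι_apply, hL', TensorAlgebra.lift_ι_apply]
      rfl
    exact fun t => AlgHom.congr_fun hc t
  constructor
  · intro x y hxy
    obtain ⟨a, rfl⟩ := hTπ'surj x
    obtain ⟨b, rfl⟩ := hTπ'surj y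
    rw [hfact, hfact] at hxy
    exact congrArg Tπ' (hinjL' hxy)
  · apply le_antisymm
    · intro x hx
      rw [AlgHom.mem_range] at hx
      obtain ⟨t, rfl⟩ := hx
      induction t using TensorAlgebra.induction with
      | algebraMap r =>
          rw [AlgHom.commutes]
          exact Subalgebra.algebraMap_mem _ r
      | ι w =>
          rw [TensorAlgebra.lift_ι_apply]
          exact Algebra.subset_adjoin w.2
      | mul a b ha hb =>
          rw [map_mul]
          exact mul_mem ha hb
      | add a b ha hb =>
          rw [map_add]
          exact add_mem ha hb
    · exact Algebra.adjoin_le fun x hx =>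
        ⟨TensorAlgebra.ι F ⟨x, hx⟩, TensorAlgebra.lift_ι_apply _ _⟩
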